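/- arXiv:1409.4393 — 7 statements merged into one kernel-verified Lean document; each statement's English description precedes it below -/
import Mathlib

section
/- Let N > 0 and η > 0 be real numbers, and define the sum-rate function R(ρ) = N · log(1 + 10^(ρ/10)/η) for ρ ∈ ℝ (logarithms are natural). Then the second derivative R''(ρ) attains its maximum over ℝ at the unique point ρ_bend = 10·log(η)/log(10); i.e., R''(ρ_bend) ≥ R''(ρ) for all ρ, with equality only at ρ = ρ_bend. -/
open Real

/-- The bend point `ρ_bend = 10·log η / log 10` is the unique global maximizer of the
second derivative of the sum-rate `R(ρ) = N·log(1 + 10^(ρ/10)/η)`. -/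
theorem bend_point_unique_max (N η : ℝ) (hN : 0 < N) (hη : 0 < η)
    (R : ℝ → ℝ) (hR : ∀ ρ : ℝ, R ρ = N * Real.log (1 + (10 : ℝ) ^ (ρ / 10) / η)) :
    (∀ ρ : ℝ, iteratedDeriv 2 R ρ ≤ iteratedDeriv 2 R (10 * Real.log η / Real.log 10)) ∧
    (∀ ρ : ℝ, iteratedDeriv 2 R ρ = iteratedDeriv 2 R (10 * Real.log η / Real.log 10) →
      ρ = 10 * Real.log η / Real.log 10) := by
  set c : ℝ := Real.log 10 / 10 with hc_def
  have hlog10 : 0 < Real.log 10 := Real.log_pos (by norm_num)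
  have hc : 0 < c := by positivity
  -- rewrite R
  have hRfun : R = fun ρ => N * Real.log (1 + Real.exp (c * ρ) / η) := by
    funext ρ
    rw [hR ρ]
    congr 2
    rw [Real.rpow_def_of_pos (by norm_num : (0:ℝ) < 10), hc_def]
    ring_nf
  -- first derivative
  have hden : ∀ ρ : ℝ, (0:ℝ) < η + Real.exp (c * ρ) := fun ρ =>
    add_pos hη (Real.exp_pos _)
  have hden1 : ∀ ρ : ℝ, (0:ℝ) < 1 + Real.exp (c * ρ) / η := fun ρ =>
    add_pos one_pos (div_pos (Real.exp_pos _) hη)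
  have hD1 : deriv R = fun ρ => N * c * Real.exp (c * ρ) / (η + Real.exp (c * ρ)) := by
    funext ρ
    rw [hRfun]
    have h1 : HasDerivAt (fun ρ : ℝ => Real.exp (c * ρ)) (Real.exp (c * ρ) * c) ρ :=
      by simpa using ((hasDerivAt_id ρ).const_mul c).exp
    have h2 : HasDerivAt (fun ρ : ℝ => 1 + Real.exp (c * ρ) / η)
        (Real.exp (c * ρ) * c / η) ρ := (h1.div_const η).const_add 1
    have h3 : HasDerivAt (fun ρ : ℝ => N * Real.log (1 + Real.exp (c * ρ) / η))
        (N * ((Real.exp (c * ρ) * c / η) / (1 + Real.exp (c * ρ) / η))) ρ :=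
      (h2.log (ne_of_gt (hden1 ρ))).const_mul N
    rw [h3.deriv]
    have h4 := (hden1 ρ).ne'
    have h5 := (hden ρ).ne'
    field_simp
  -- second derivative
  have hD2 : ∀ ρ : ℝ, iteratedDeriv 2 R ρ =
      N * c ^ 2 * η * Real.exp (c * ρ) / (η + Real.exp (c * ρ)) ^ 2 := by
    intro ρ
    have : iteratedDeriv 2 R = deriv (deriv R) := by
      rw [show (2:ℕ) = 1 + 1 from rfl, iteratedDeriv_succ, iteratedDeriv_one]
    rw [this, hD1]
    have h1 : HasDerivAt (fun ρ : ℝ => Real.exp (c * ρ)) (Real.exp (c * ρ) * c) ρ :=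
      by simpa using ((hasDerivAt_id ρ).const_mul c).exp
    have hnum : HasDerivAt (fun ρ : ℝ => N * c * Real.exp (c * ρ))
        (N * c * (Real.exp (c * ρ) * c)) ρ := h1.const_mul (N * c)
    have hd : HasDerivAt (fun ρ : ℝ => η + Real.exp (c * ρ))
        (Real.exp (c * ρ) * c) ρ := h1.const_add η
    have hq : HasDerivAt (fun ρ : ℝ => N * c * Real.exp (c * ρ) / (η + Real.exp (c * ρ)))
        ((N * c * (Real.exp (c * ρ) * c) * (η + Real.exp (c * ρ)) -
          N * c * Real.exp (c * ρ) * (Real.exp (c * ρ) * c)) / (η + Real.exp (c * ρ)) ^ 2) ρ :=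
      hnum.div hd (hden ρ).ne'
    rw [hq.deriv]
    have h5 := (hden ρ).ne'
    field_simp
    ring
  -- value at the bend point
  have hcρ : c * (10 * Real.log η / Real.log 10) = Real.log η := by
    rw [hc_def]; field_simp
  have hval : iteratedDeriv 2 R (10 * Real.log η / Real.log 10) = N * c ^ 2 / 4 := by
    rw [hD2, hcρ, Real.exp_log hη]
    field_simp
    ring
  constructor
  · intro ρ
    rw [hD2, hval]
    set E := Real.exp (c * ρ) with hE
    have hEpos : 0 < E := Real.exp_pos _
    rw [div_le_div_iff₀ (by positivity) (by norm_num : (0:ℝ) < 4)]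
    nlinarith [sq_nonneg (η - E), mul_pos hN (mul_pos (pow_pos hc 2) hη),
      mul_nonneg (mul_pos hN (pow_pos hc 2)).le (sq_nonneg (η - E))]
  · intro ρ hρ
    rw [hD2, hval] at hρ
    set E := Real.exp (c * ρ) with hE
    have hEpos : 0 < E := Real.exp_pos _
    have hdp : (0:ℝ) < (η + E) ^ 2 := by positivity
    have h1 : N * c ^ 2 * η * E * 4 = N * c ^ 2 * (η + E) ^ 2 := by
      field_simp at hρ
      linear_combination N * c ^ 2 * hρ
    have hNc : 0 < N * c ^ 2 := by positivity
    have h2 : (η - E) ^ 2 = 0 := by nlinarith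
    have h3 : E = η := by nlinarith [sq_nonneg (η - E)]
    have h4 : c * ρ = Real.log η := by
      have := h3
      rw [hE] at this
      have := Real.log_exp (c * ρ)
      rw [show Real.exp (c * ρ) = η from ‹_›] at this
      linarith [this]
    have : ρ = Real.log η / c := by
      field_simp at h4 ⊢
      linarith [h4]
    rw [this, hc_def]
    field_simp
end

section
/- Let N > 0 and η > 0 be real numbers, and define R(ρ) = N · log(1 + 10^(ρ/10)/η) for ρ ∈ ℝ. Then for all ρ ∈ ℝ, the third derivative of R satisfies R'''(ρ) = (N/η²)·(log(10)/10)³ · (η·10^(ρ/10) − 10^(2ρ/10)) / (1 + 10^(ρ/10)/η)³. -/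
open Real

/-- Closed form of the third derivative of the sum-rate
`R(ρ) = N·log(1 + 10^(ρ/10)/η)`. -/
theorem third_deriv_sum_rate (N η : ℝ) (hN : 0 < N) (hη : 0 < η)
    (R : ℝ → ℝ) (hR : ∀ ρ : ℝ, R ρ = N * Real.log (1 + (10 : ℝ) ^ (ρ / 10) / η)) :
    ∀ ρ : ℝ, iteratedDeriv 3 R ρ =
      (N / η ^ 2) * (Real.log 10 / 10) ^ 3 *
        ((η * (10 : ℝ) ^ (ρ / 10) - (10 : ℝ) ^ (2 * ρ / 10)) /
          (1 + (10 : ℝ) ^ (ρ / 10) / η) ^ 3) := by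
  have h10 : (0:ℝ) < 10 := by norm_num
  set c : ℝ := Real.log 10 / 10 with hc
  set E : ℝ → ℝ := fun ρ => (10 : ℝ) ^ (ρ / 10) with hEdef
  have hEpos : ∀ ρ, 0 < E ρ := fun ρ => Real.rpow_pos_of_pos h10 _
  have hDpos : ∀ ρ, 0 < η + E ρ := fun ρ => by positivity
  have hDne : ∀ ρ, η + E ρ ≠ 0 := fun ρ => (hDpos ρ).ne'
  have hne : ∀ ρ, (1 + E ρ / η) ≠ 0 := fun ρ => by positivity
  have hE : ∀ ρ : ℝ, HasDerivAt E (c * E ρ) ρ := by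
    intro ρ
    have h1 : HasDerivAt (fun ρ : ℝ => ρ / 10) (1 / 10) ρ := by
      simpa using (hasDerivAt_id ρ).div_const 10
    have h2 := (Real.hasStrictDerivAt_const_rpow h10 (ρ / 10)).hasDerivAt
    have h3 := h2.comp ρ h1
    have h4 : HasDerivAt E ((10 : ℝ) ^ (ρ / 10) * Real.log 10 * (1 / 10)) ρ := h3
    convert h4 using 1
    rw [hc]; ring
  have hRfun : R = fun ρ => N * Real.log (1 + E ρ / η) := funext hR
  -- first derivative
  have hD1 : ∀ ρ, HasDerivAt R (N * c * E ρ / (η + E ρ)) ρ := by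
    intro ρ
    rw [hRfun]
    have h1 : HasDerivAt (fun ρ => 1 + E ρ / η) (c * E ρ / η) ρ :=
      ((hE ρ).div_const η).const_add 1
    have h2 := (h1.log (hne ρ)).const_mul N
    refine h2.congr_deriv ?_
    field_simp
  have d1 : deriv R = fun ρ => N * c * E ρ / (η + E ρ) := funext fun ρ => (hD1 ρ).deriv
  -- second derivative
  have hD2 : ∀ ρ, HasDerivAt (fun ρ => N * c * E ρ / (η + E ρ))
      (N * c ^ 2 * η * E ρ / (η + E ρ) ^ 2) ρ := by
    intro ρ
    have hnum : HasDerivAt (fun ρ => N * c * E ρ) (N * c * (c * E ρ)) ρ :=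
      (hE ρ).const_mul (N * c)
    have hden : HasDerivAt (fun ρ => η + E ρ) (c * E ρ) ρ := (hE ρ).const_add η
    have h := hnum.div hden (hDne ρ)
    refine h.congr_deriv ?_
    field_simp
    ring
  have d2 : deriv (fun ρ => N * c * E ρ / (η + E ρ))
      = fun ρ => N * c ^ 2 * η * E ρ / (η + E ρ) ^ 2 := funext fun ρ => (hD2 ρ).deriv
  -- third derivative
  have hD3 : ∀ ρ, HasDerivAt (fun ρ => N * c ^ 2 * η * E ρ / (η + E ρ) ^ 2)
      (N * c ^ 3 * η * E ρ * (η - E ρ) / (η + E ρ) ^ 3) ρ := by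
    intro ρ
    have hnum : HasDerivAt (fun ρ => N * c ^ 2 * η * E ρ) (N * c ^ 2 * η * (c * E ρ)) ρ :=
      (hE ρ).const_mul (N * c ^ 2 * η)
    have hden0 : HasDerivAt (fun ρ => η + E ρ) (c * E ρ) ρ := (hE ρ).const_add η
    have hden : HasDerivAt (fun ρ => (η + E ρ) ^ 2)
        ((2 : ℕ) * (η + E ρ) ^ (2 - 1) * (c * E ρ)) ρ := hden0.pow 2
    have hden2ne : (η + E ρ) ^ 2 ≠ 0 := pow_ne_zero _ (hDne ρ)
    have h := hnum.div hden hden2ne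
    refine h.congr_deriv ?_
    rw [div_eq_div_iff (pow_ne_zero _ hden2ne) (pow_ne_zero _ (hDne ρ))]
    simp only [Nat.cast_ofNat, show (2:ℕ) - 1 = 1 from rfl, pow_one]
    ring
  have d3 : deriv (fun ρ => N * c ^ 2 * η * E ρ / (η + E ρ) ^ 2)
      = fun ρ => N * c ^ 3 * η * E ρ * (η - E ρ) / (η + E ρ) ^ 3 :=
    funext fun ρ => (hD3 ρ).deriv
  intro ρ
  have hiter : iteratedDeriv 3 R = deriv (deriv (deriv R)) := by
    simp [iteratedDeriv_succ, iteratedDeriv_zero]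
  rw [hiter, d1, d2, d3]
  have hsq : (10 : ℝ) ^ (2 * ρ / 10) = E ρ * E ρ := by
    rw [hEdef]
    rw [← Real.rpow_add h10]
    ring_nf
  rw [hsq]
  have hη' : η ≠ 0 := hη.ne'
  have h1 : (1 + E ρ / η) = (η + E ρ) / η := by field_simp
  rw [h1]
  have hE10 : (10 : ℝ) ^ (ρ / 10) = E ρ := rfl
  rw [hE10]
  simp only
  rw [div_pow]
  field_simp
end

section
/- Let N > 0 and η > 0 be real numbers, and define R(ρ) = N · log(1 + 10^(ρ/10)/η) for ρ ∈ ℝ. Then the third derivative of R vanishes at ρ_int = 10·log(η)/log(10); i.e., R'''(ρ_int) = 0. -/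
open Real

private lemma hasDerivAt_aux (N η c : ℝ) (hη : 0 < η) (ρ : ℝ) :
    HasDerivAt (fun x => N * Real.log (1 + Real.exp (c * x) / η))
      (N * c * Real.exp (c * ρ) / (η + Real.exp (c * ρ))) ρ := by
  have hx : HasDerivAt (fun x : ℝ => c * x) c ρ := by
    simpa using (hasDerivAt_id ρ).const_mul c
  have he : HasDerivAt (fun x => Real.exp (c * x)) (Real.exp (c * ρ) * c) ρ :=
    (Real.hasDerivAt_exp (c * ρ)).comp ρ hx
  have hpos : 0 < 1 + Real.exp (c * ρ) / η := by positivity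
  have hlog := ((he.div_const η).const_add 1).log (ne_of_gt hpos)
  have : HasDerivAt (fun x => N * Real.log (1 + Real.exp (c * x) / η)) _ ρ := hlog.const_mul N
  convert this using 1
  have h1 : η + Real.exp (c * ρ) > 0 := by positivity
  field_simp

/-- The third derivative of the sum-rate `R(ρ) = N·log(1 + 10^(ρ/10)/η)` vanishes at the
intercept `ρ_int = 10·log η / log 10`. -/
theorem third_deriv_vanishes_at_intercept (N η : ℝ) (hN : 0 < N) (hη : 0 < η)
    (R : ℝ → ℝ) (hR : ∀ ρ : ℝ, R ρ = N * Real.log (1 + (10 : ℝ) ^ (ρ / 10) / η)) :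
    iteratedDeriv 3 R (10 * Real.log η / Real.log 10) = 0 := by
  set c : ℝ := Real.log 10 / 10 with hc
  have hfun : R = fun ρ => N * Real.log (1 + Real.exp (c * ρ) / η) := by
    funext ρ
    rw [hR, Real.rpow_def_of_pos (by norm_num : (0:ℝ) < 10)]
    rw [hc]
    ring_nf
  have hden : ∀ ρ : ℝ, 0 < η + Real.exp (c * ρ) := fun ρ => by positivity
  -- first derivative
  have hd1 : deriv R = fun ρ => N * c * Real.exp (c * ρ) / (η + Real.exp (c * ρ)) := by
    funext ρ
    rw [hfun]
    exact (hasDerivAt_aux N η c hη ρ).deriv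
  -- derivative building blocks
  have hE : ∀ ρ : ℝ, HasDerivAt (fun x => Real.exp (c * x)) (c * Real.exp (c * ρ)) ρ := by
    intro ρ
    have hx : HasDerivAt (fun x : ℝ => c * x) c ρ := by
      simpa using (hasDerivAt_id ρ).const_mul c
    have h : HasDerivAt (fun x => Real.exp (c * x)) (Real.exp (c * ρ) * c) ρ :=
      (Real.hasDerivAt_exp (c * ρ)).comp ρ hx
    rwa [mul_comm] at h
  -- second derivative
  have hd2 : deriv (deriv R) = fun ρ =>
      N * c ^ 2 * η * Real.exp (c * ρ) / (η + Real.exp (c * ρ)) ^ 2 := by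
    funext ρ
    rw [hd1]
    have hu : HasDerivAt (fun x => N * c * Real.exp (c * x))
        (N * c * (c * Real.exp (c * ρ))) ρ := (hE ρ).const_mul (N * c)
    have hv : HasDerivAt (fun x => η + Real.exp (c * x)) (c * Real.exp (c * ρ)) ρ :=
      (hE ρ).const_add η
    have h : deriv (fun x => N * c * Real.exp (c * x) / (η + Real.exp (c * x))) ρ = _ :=
      (hu.div hv (ne_of_gt (hden ρ))).deriv
    rw [h]
    have h1 := hden ρ
    field_simp
    ring
  -- value of exp at the intercept
  set ρ0 : ℝ := 10 * Real.log η / Real.log 10 with hρ0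
  have hlog10 : Real.log 10 ≠ 0 := ne_of_gt (Real.log_pos (by norm_num))
  have hEρ0 : Real.exp (c * ρ0) = η := by
    have : c * ρ0 = Real.log η := by
      rw [hc, hρ0]; field_simp
    rw [this, Real.exp_log hη]
  -- third derivative at the intercept
  have hu : HasDerivAt (fun x => N * c ^ 2 * η * Real.exp (c * x))
      (N * c ^ 2 * η * (c * Real.exp (c * ρ0))) ρ0 := (hE ρ0).const_mul (N * c ^ 2 * η)
  have hv : HasDerivAt (fun x => (η + Real.exp (c * x)) ^ 2)
      (2 * (η + Real.exp (c * ρ0)) * (c * Real.exp (c * ρ0))) ρ0 := by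
    have h : HasDerivAt (fun x => (η + Real.exp (c * x)) ^ 2) _ ρ0 :=
      ((hE ρ0).const_add η).pow 2
    simpa [mul_comm, mul_assoc, mul_left_comm] using h
  have hvne : (η + Real.exp (c * ρ0)) ^ 2 ≠ 0 := pow_ne_zero 2 (ne_of_gt (hden ρ0))
  have h3 : deriv (fun x => N * c ^ 2 * η * Real.exp (c * x) / (η + Real.exp (c * x)) ^ 2) ρ0
      = _ := (hu.div hv hvne).deriv
  rw [iteratedDeriv_succ, iteratedDeriv_succ, iteratedDeriv_one, hd2]
  rw [show (fun ρ => N * c ^ 2 * η * Real.exp (c * ρ) / (η + Real.exp (c * ρ)) ^ 2)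
      = fun ρ => (N * c ^ 2 * η * Real.exp (c * ρ)) / ((η + Real.exp (c * ρ)) ^ 2) from rfl]
  rw [h3, hEρ0]
  have h1 : (0:ℝ) < η + η := by linarith
  field_simp
  ring
end

section
/- Let N > 0 and η > 0 be real numbers, and define R(ρ) = N · log(1 + 10^(ρ/10)/η) for ρ ∈ ℝ. Then the fourth derivative of R is strictly negative at ρ_int = 10·log(η)/log(10); i.e., R''''(ρ_int) < 0. -/
open Real

/-- The fourth derivative of the sum-rate `R(ρ) = N·log(1 + 10^(ρ/10)/η)` is strictly
negative at the intercept `ρ_int = 10·log η / log 10`. -/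
theorem fourth_deriv_neg_at_intercept (N η : ℝ) (hN : 0 < N) (hη : 0 < η)
    (R : ℝ → ℝ) (hR : ∀ ρ : ℝ, R ρ = N * Real.log (1 + (10 : ℝ) ^ (ρ / 10) / η)) :
    iteratedDeriv 4 R (10 * Real.log η / Real.log 10) < 0 := by
  have h10 : (0:ℝ) < Real.log 10 := Real.log_pos (by norm_num)
  set c : ℝ := Real.log 10 / 10 with hc
  have hcpos : 0 < c := by positivity
  set e : ℝ → ℝ := fun ρ => Real.exp (c * ρ - Real.log η) with he
  have hepos : ∀ ρ, 0 < e ρ := fun ρ => Real.exp_pos _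
  have hden : ∀ ρ, (1 : ℝ) + e ρ ≠ 0 := fun ρ => by have := hepos ρ; positivity
  set x0 : ℝ := 10 * Real.log η / Real.log 10 with hx0
  have hRe : R = fun ρ => N * Real.log (1 + e ρ) := by
    funext ρ
    rw [hR]
    have h1 : (10:ℝ) ^ (ρ / 10) = Real.exp (c * ρ) := by
      rw [Real.rpow_def_of_pos (by norm_num : (0:ℝ) < 10)]
      congr 1
      rw [hc]; ring
    rw [h1, he]
    simp only []
    rw [Real.exp_sub, Real.exp_log hη]
  subst hRe
  have hE : ∀ ρ, HasDerivAt e (c * e ρ) ρ := by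
    intro ρ
    have h1 : HasDerivAt (fun ρ : ℝ => c * ρ - Real.log η) c ρ := by
      simpa using ((hasDerivAt_id ρ).const_mul c).sub_const (Real.log η)
    have := h1.exp
    simpa [he, mul_comm] using this
  have h1 : ∀ ρ, HasDerivAt (fun ρ => N * Real.log (1 + e ρ))
      (N * c * (e ρ / (1 + e ρ))) ρ := by
    intro ρ
    have := (((hE ρ).const_add 1).log (hden ρ)).const_mul N
    convert this using 1
    · rfl
    · rfl
    field_simp
  have hd1 : deriv (fun ρ => N * Real.log (1 + e ρ))
      = fun ρ => N * c * (e ρ / (1 + e ρ)) := funext fun ρ => (h1 ρ).deriv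
  have h2 : ∀ ρ, HasDerivAt (fun ρ => N * c * (e ρ / (1 + e ρ)))
      (N * c^2 * (e ρ / (1 + e ρ)^2)) ρ := by
    intro ρ
    have hq := (hE ρ).div ((hE ρ).const_add 1) (hden ρ)
    have := hq.const_mul (N * c)
    convert this using 1
    · rfl
    · rfl
    · rfl
    field_simp; ring
  have hd2 : deriv (fun ρ => N * c * (e ρ / (1 + e ρ)))
      = fun ρ => N * c^2 * (e ρ / (1 + e ρ)^2) := funext fun ρ => (h2 ρ).deriv
  have h3 : ∀ ρ, HasDerivAt (fun ρ => N * c^2 * (e ρ / (1 + e ρ)^2))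
      (N * c^3 * (e ρ * (1 - e ρ) / (1 + e ρ)^3)) ρ := by
    intro ρ
    have hv := ((hE ρ).const_add 1).pow 2
    have hq := (hE ρ).div hv (pow_ne_zero 2 (hden ρ))
    have := hq.const_mul (N * c^2)
    convert this using 1
    · rfl
    · rfl
    · rfl
    have h := hden ρ
    simp only [Pi.pow_apply, Pi.mul_apply]
    field_simp
    ring
  have hd3 : deriv (fun ρ => N * c^2 * (e ρ / (1 + e ρ)^2))
      = fun ρ => N * c^3 * (e ρ * (1 - e ρ) / (1 + e ρ)^3) := funext fun ρ => (h3 ρ).deriv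
  have h4 : HasDerivAt (fun ρ => N * c^3 * (e ρ * (1 - e ρ) / (1 + e ρ)^3))
      (N * c^4 * (e x0 * (1 - 4 * e x0 + e x0^2) / (1 + e x0)^4)) x0 := by
    have hu := (hE x0).mul ((hE x0).const_sub 1)
    have hv := ((hE x0).const_add 1).pow 3
    have hq := hu.div hv (pow_ne_zero 3 (hden x0))
    have := hq.const_mul (N * c^3)
    convert this using 1
    · rfl
    · rfl
    · rfl
    have h := hden x0
    simp only [Pi.pow_apply, Pi.mul_apply]
    field_simp
    ring
  have hex0 : e x0 = 1 := by
    have harg : c * x0 - Real.log η = 0 := by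
      rw [hc, hx0]
      field_simp
      ring
    rw [he]
    simp only []
    rw [harg, Real.exp_zero]
  have hiter : iteratedDeriv 4 (fun ρ => N * Real.log (1 + e ρ))
      = deriv (deriv (deriv (deriv (fun ρ => N * Real.log (1 + e ρ))))) := by
    rw [show (4:ℕ) = 3+1 from rfl, iteratedDeriv_succ,
        show (3:ℕ) = 2+1 from rfl, iteratedDeriv_succ,
        show (2:ℕ) = 1+1 from rfl, iteratedDeriv_succ, iteratedDeriv_one]
  rw [hiter, hd1, hd2, hd3]
  rw [h4.deriv, hex0]
  have hc4 : 0 < c ^ 4 := pow_pos hcpos 4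
  nlinarith [mul_pos hN hc4]
end

section
/- Let N > 0 and η > 0 be real numbers, and define R(ρ) = N · log(1 + 10^(ρ/10)/η) for ρ ∈ ℝ. Then the second derivative R'' is strictly monotonically decreasing on the interval (ρ_bend, ∞), where ρ_bend = 10·log(η)/log(10). -/
open Real

private lemma exp_form (ρ : ℝ) : (10 : ℝ) ^ (ρ / 10) = Real.exp (Real.log 10 / 10 * ρ) := by
  rw [Real.rpow_def_of_pos (by norm_num : (0:ℝ) < 10)]
  ring_nf

private lemma hasDerivAt_inner (η : ℝ) (hη : 0 < η) (ρ : ℝ) :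
    HasDerivAt (fun x => 1 + Real.exp (Real.log 10 / 10 * x) / η)
      (Real.log 10 / 10 * Real.exp (Real.log 10 / 10 * ρ) / η) ρ := by
  have h1 : HasDerivAt (fun x : ℝ => Real.log 10 / 10 * x) (Real.log 10 / 10) ρ := by
    simpa using (hasDerivAt_id ρ).const_mul (Real.log 10 / 10)
  have h2 := (h1.exp.div_const η).const_add 1
  simpa [mul_comm] using h2

/-- The second derivative of the sum-rate `R(ρ) = N·log(1 + 10^(ρ/10)/η)` is strictly
monotonically decreasing on `(ρ_bend, ∞)`, where `ρ_bend = 10·log η / log 10`. -/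
theorem second_deriv_strictAnti (N η : ℝ) (hN : 0 < N) (hη : 0 < η)
    (R : ℝ → ℝ) (hR : ∀ ρ : ℝ, R ρ = N * Real.log (1 + (10 : ℝ) ^ (ρ / 10) / η)) :
    StrictAntiOn (iteratedDeriv 2 R) (Set.Ioi (10 * Real.log η / Real.log 10)) := by
  set c : ℝ := Real.log 10 / 10 with hc
  have hc0 : 0 < c := by
    have : (0:ℝ) < Real.log 10 := Real.log_pos (by norm_num)
    positivity
  have hRe : R = fun ρ => N * Real.log (1 + Real.exp (c * ρ) / η) := by
    funext ρ; rw [hR, exp_form]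
  have hden : ∀ ρ : ℝ, 0 < η + Real.exp (c * ρ) := fun ρ => by positivity
  have harg : ∀ ρ : ℝ, 0 < 1 + Real.exp (c * ρ) / η := fun ρ => by positivity
  -- first derivative
  have hD1 : ∀ ρ : ℝ, HasDerivAt R (N * c * Real.exp (c * ρ) / (η + Real.exp (c * ρ))) ρ := by
    intro ρ
    rw [hRe]
    have h := ((hasDerivAt_inner η hη ρ).log (ne_of_gt (harg ρ))).const_mul N
    refine h.congr_deriv ?_
    have he := (Real.exp_pos (c * ρ)).ne'
    rw [hc]
    field_simp
  -- second derivative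
  have hD2 : ∀ ρ : ℝ, HasDerivAt (deriv R)
      (N * c ^ 2 * η * Real.exp (c * ρ) / (η + Real.exp (c * ρ)) ^ 2) ρ := by
    intro ρ
    have hderiv : deriv R = fun x => N * c * Real.exp (c * x) / (η + Real.exp (c * x)) := by
      funext x; exact (hD1 x).deriv
    rw [hderiv]
    have h1 : HasDerivAt (fun x : ℝ => c * x) c ρ := by
      simpa using (hasDerivAt_id ρ).const_mul c
    have hnum : HasDerivAt (fun x => N * c * Real.exp (c * x))
        (N * c * (c * Real.exp (c * ρ))) ρ := by
      simpa [mul_comm] using h1.exp.const_mul (N * c)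
    have hden' : HasDerivAt (fun x => η + Real.exp (c * x)) (c * Real.exp (c * ρ)) ρ := by
      simpa [mul_comm] using h1.exp.const_add η
    have h := hnum.div hden' (ne_of_gt (hden ρ))
    refine h.congr_deriv ?_
    have he := (Real.exp_pos (c * ρ)).ne'
    field_simp
    ring
  have h2 : iteratedDeriv 2 R = fun ρ =>
      N * c ^ 2 * η * Real.exp (c * ρ) / (η + Real.exp (c * ρ)) ^ 2 := by
    funext ρ
    rw [show (2:ℕ) = 1 + 1 from rfl, iteratedDeriv_succ, iteratedDeriv_one]
    exact (hD2 ρ).deriv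
  rw [h2]
  intro a ha b hb hab
  simp only [Set.mem_Ioi] at ha hb
  -- exp (c*a), exp(c*b) > η
  have hkey : ∀ x : ℝ, 10 * Real.log η / Real.log 10 < x → η < Real.exp (c * x) := by
    intro x hx
    have hl10 : (0:ℝ) < Real.log 10 := Real.log_pos (by norm_num)
    have : Real.log η < c * x := by
      rw [hc]
      rw [div_lt_iff₀ hl10] at hx
      nlinarith
    calc η = Real.exp (Real.log η) := (Real.exp_log hη).symm
    _ < Real.exp (c * x) := Real.exp_lt_exp.mpr this
  have hsa : η < Real.exp (c * a) := hkey a ha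
  have hsb : η < Real.exp (c * b) := hkey b hb
  have hst : Real.exp (c * a) < Real.exp (c * b) :=
    Real.exp_lt_exp.mpr (by nlinarith)
  set s := Real.exp (c * a)
  set t := Real.exp (c * b)
  have hK : 0 < N * c ^ 2 * η := by positivity
  have h1 : (0:ℝ) < (η + s) ^ 2 := by positivity
  have h2' : (0:ℝ) < (η + t) ^ 2 := by positivity
  rw [div_lt_div_iff₀ h2' h1]
  nlinarith [mul_pos (sub_pos.mpr hst) (sub_pos.mpr (show η^2 < s * t by nlinarith))]
end

section
/- The function x ↦ E₁(x) + γ + log(x), where E₁(x) = ∫ₓ^∞ e^(−t)/t dt and γ is the Euler–Mascheroni constant, tends to 0 as x → 0 from the right; i.e., E₁(x) ≅ −γ − log(x) as x → 0⁺. -/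
open Real Filter
open MeasureTheory Set

-- integrability of log t * exp (-t) on Ioi 0
lemma aux_integrable_g : IntegrableOn (fun t : ℝ => Real.log t * Real.exp (-t)) (Set.Ioi 0) := by
  rw [← Set.Ioc_union_Ioi_eq_Ioi (zero_le_one (α := ℝ)), integrableOn_union]
  constructor
  · -- on Ioc 0 1, dominate by 2 * t ^ (-1/2)
    have hint : IntegrableOn (fun t : ℝ => 2 * t ^ (-(1/2) : ℝ)) (Set.Ioc 0 1) := by
      refine Integrable.const_mul ?_ 2
      have := (intervalIntegral.intervalIntegrable_rpow' (a := 0) (b := 1)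
        (r := -(1/2)) (by norm_num))
      rwa [intervalIntegrable_iff_integrableOn_Ioc_of_le zero_le_one] at this
    refine Integrable.mono' hint ?_ ?_
    · exact ((Real.measurable_log.mul
        (Real.measurable_exp.comp measurable_neg)).aestronglyMeasurable).restrict
    · filter_upwards [ae_restrict_mem measurableSet_Ioc] with t ht
      have ht0 : (0:ℝ) < t := ht.1
      have ht1 : t ≤ 1 := ht.2
      have hlog : |Real.log t| ≤ 2 * t ^ (-(1/2) : ℝ) := by
        rw [abs_of_nonpos (Real.log_nonpos ht0.le ht1)]
        have h1 : Real.log t = 2 * Real.log (t ^ ((1:ℝ)/2)) := by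
          rw [Real.log_rpow ht0]; ring
        have h2 : Real.log (t ^ ((1:ℝ)/2)) ≥ 1 - (t ^ ((1:ℝ)/2))⁻¹ := by
          have := Real.add_one_le_exp (-Real.log (t ^ ((1:ℝ)/2)))
          rw [Real.exp_neg, Real.exp_log (Real.rpow_pos_of_pos ht0 _)] at this
          linarith
        have h3 : (t ^ ((1:ℝ)/2))⁻¹ = t ^ (-(1/2) : ℝ) := by
          rw [← Real.rpow_neg ht0.le]
        rw [h1]
        nlinarith [Real.rpow_pos_of_pos ht0 (-(1/2) : ℝ), h3 ▸ h2]
      calc ‖Real.log t * Real.exp (-t)‖ ≤ |Real.log t| * 1 := by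
            rw [norm_mul, Real.norm_eq_abs, Real.norm_eq_abs]
            refine mul_le_mul_of_nonneg_left ?_ (abs_nonneg _)
            rw [abs_of_pos (Real.exp_pos _)]
            exact Real.exp_le_one_iff.2 (by linarith)
        _ ≤ 2 * t ^ (-(1/2) : ℝ) := by rw [mul_one]; exact hlog
  · -- on Ioi 1, dominate by exp (-t) * t
    have hint : IntegrableOn (fun t : ℝ => Real.exp (-t) * t ^ ((2:ℝ) - 1)) (Set.Ioi 1) :=
      (Real.GammaIntegral_convergent two_pos).mono_set (Set.Ioi_subset_Ioi zero_le_one)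
    refine Integrable.mono' hint ?_ ?_
    · exact ((Real.measurable_log.mul
        (Real.measurable_exp.comp measurable_neg)).aestronglyMeasurable).restrict
    · filter_upwards [ae_restrict_mem measurableSet_Ioi] with t ht
      have ht1 : (1:ℝ) < t := ht
      have ht0 : (0:ℝ) < t := lt_trans one_pos ht1
      rw [norm_mul, Real.norm_eq_abs, Real.norm_eq_abs,
        abs_of_pos (Real.exp_pos _), abs_of_pos (Real.log_pos ht1)]
      have : t ^ ((2:ℝ) - 1) = t := by norm_num
      rw [this, mul_comm (Real.log t)]
      have hlt : Real.log t ≤ t := by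
        have := Real.log_lt_sub_one_of_pos ht0 ht1.ne'
        linarith
      exact mul_le_mul_of_nonneg_left hlt (Real.exp_pos _).le

lemma aux_gamma_eq : ∫ t in Set.Ioi (0:ℝ), Real.log t * Real.exp (-t) =
    -Real.eulerMascheroniConstant := by
  have h1 : HasDerivAt Complex.GammaIntegral
      (∫ t : ℝ in Set.Ioi 0, (t:ℂ) ^ ((1:ℂ) - 1) * (Real.log t * Real.exp (-t))) 1 :=
    Complex.hasDerivAt_GammaIntegral (by norm_num)
  have heq : (∫ t : ℝ in Set.Ioi 0, (t:ℂ) ^ ((1:ℂ) - 1) * (Real.log t * Real.exp (-t)))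
      = ((∫ t in Set.Ioi (0:ℝ), Real.log t * Real.exp (-t) : ℝ) : ℂ) := by
    rw [show ((∫ t in Set.Ioi (0:ℝ), Real.log t * Real.exp (-t) : ℝ) : ℂ)
        = ∫ t in Set.Ioi (0:ℝ), ((Real.log t * Real.exp (-t) : ℝ) : ℂ) from
      (integral_ofReal (𝕜 := ℂ)).symm]
    refine setIntegral_congr_fun measurableSet_Ioi fun t ht => ?_
    rw [sub_self, Complex.cpow_zero, one_mul]
    push_cast
    ring
  rw [heq] at h1
  have hev : Complex.Gamma =ᶠ[nhds (1:ℂ)] Complex.GammaIntegral := by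
    have hopen : IsOpen {s : ℂ | 0 < s.re} := isOpen_lt continuous_const Complex.continuous_re
    filter_upwards [hopen.mem_nhds (by norm_num : (0:ℝ) < (1:ℂ).re)] with s hs
    exact Complex.Gamma_eq_integral hs
  have h2 : HasDerivAt Complex.Gamma
      ((∫ t in Set.Ioi (0:ℝ), Real.log t * Real.exp (-t) : ℝ) : ℂ) 1 :=
    h1.congr_of_eventuallyEq hev
  have h3 := Complex.hasDerivAt_Gamma_one
  have := h2.unique h3
  exact_mod_cast this

lemma aux_integrable_E1 {x : ℝ} (hx : 0 < x) :
    IntegrableOn (fun t : ℝ => Real.exp (-t) / t) (Set.Ioi x) := by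
  have hint : IntegrableOn (fun t : ℝ => Real.exp (-(1:ℝ) * t) * x⁻¹) (Set.Ioi x) :=
    (exp_neg_integrableOn_Ioi x one_pos).mul_const _
  refine Integrable.mono' hint ?_ ?_
  · exact (((Real.measurable_exp.comp measurable_neg).div
      measurable_id).aestronglyMeasurable).restrict
  · filter_upwards [ae_restrict_mem measurableSet_Ioi] with t ht
    have htx : x < t := ht
    have ht0 : 0 < t := hx.trans htx
    rw [Real.norm_eq_abs, abs_of_pos (div_pos (Real.exp_pos _) ht0), neg_one_mul,
      div_eq_mul_inv]
    exact mul_le_mul_of_nonneg_left (by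
      rw [inv_le_inv₀ ht0 hx]; exact htx.le) (Real.exp_pos _).le

lemma aux_tendsto_atTop : Tendsto (fun t : ℝ => Real.exp (-t) * Real.log t) atTop (nhds 0) := by
  refine tendsto_of_tendsto_of_tendsto_of_le_of_le' (tendsto_const_nhds (x := (0:ℝ)))
    ((by simpa using Real.tendsto_pow_mul_exp_neg_atTop_nhds_zero 1) :
      Tendsto (fun t : ℝ => t * Real.exp (-t)) atTop (nhds 0)) ?_ ?_
  · filter_upwards [eventually_ge_atTop (1:ℝ)] with t ht
    exact mul_nonneg (Real.exp_pos _).le (Real.log_nonneg ht)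
  · filter_upwards [eventually_ge_atTop (1:ℝ)] with t ht
    have h0 : (0:ℝ) < t := lt_of_lt_of_le one_pos ht
    have : Real.log t ≤ t := by
      rcases eq_or_lt_of_le ht with h | h
      · simp [← h]
      · have := Real.log_lt_sub_one_of_pos h0 (by linarith : t ≠ 1)
        linarith
    calc Real.exp (-t) * Real.log t ≤ Real.exp (-t) * t :=
          mul_le_mul_of_nonneg_left this (Real.exp_pos _).le
      _ = t * Real.exp (-t) := mul_comm _ _

lemma aux_ibp {x : ℝ} (hx : 0 < x) :
    ∫ t in Set.Ioi x, (Real.log t * Real.exp (-t) - Real.exp (-t) / t) =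
      Real.exp (-x) * Real.log x := by
  have hderiv : ∀ t ∈ Set.Ioi x, HasDerivAt (fun t : ℝ => -(Real.exp (-t) * Real.log t))
      (Real.log t * Real.exp (-t) - Real.exp (-t) / t) t := by
    intro t ht
    have ht0 : 0 < t := hx.trans ht
    have h1 : HasDerivAt (fun t : ℝ => Real.exp (-t)) (-Real.exp (-t)) t := by
      convert (hasDerivAt_neg t).exp using 1; ring
    have h2 : HasDerivAt Real.log t⁻¹ t := Real.hasDerivAt_log ht0.ne'
    have := (h1.mul h2).neg
    refine this.congr_deriv ?_
    ring
  have hint : IntegrableOn (fun t : ℝ => Real.log t * Real.exp (-t) - Real.exp (-t) / t)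
      (Set.Ioi x) :=
    (aux_integrable_g.mono_set (Set.Ioi_subset_Ioi hx.le)).sub (aux_integrable_E1 hx)
  have hcont : ContinuousWithinAt (fun t : ℝ => -(Real.exp (-t) * Real.log t)) (Set.Ici x) x :=
    (((Real.continuous_exp.comp continuous_neg).continuousAt.mul
      (Real.continuousAt_log hx.ne')).neg).continuousWithinAt
  have htop : Tendsto (fun t : ℝ => -(Real.exp (-t) * Real.log t)) atTop (nhds 0) := by
    simpa using aux_tendsto_atTop.neg
  have := MeasureTheory.integral_Ioi_of_hasDerivAt_of_tendsto hcont hderiv hint htop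
  rw [this]
  ring

/-- The exponential integral `E₁(x) = ∫ₓ^∞ e^(−t)/t dt`. -/
noncomputable def expIntegralE1 (x : ℝ) : ℝ := ∫ t in Set.Ioi x, Real.exp (-t) / t

/-- `E₁(x) ≅ −γ − log x` as `x → 0⁺`: the difference `E₁(x) + γ + log x` tends to `0`
as `x → 0` from the right, where `γ` is the Euler–Mascheroni constant. -/
theorem expIntegral_asymptotic_zero :
    Tendsto (fun x : ℝ => expIntegralE1 x + Real.eulerMascheroniConstant + Real.log x)
      (nhdsWithin 0 (Set.Ioi 0)) (nhds 0) := by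
  set g : ℝ → ℝ := fun t => Real.log t * Real.exp (-t) with hg
  -- key identity
  have key : ∀ x : ℝ, 0 < x →
      expIntegralE1 x + Real.eulerMascheroniConstant + Real.log x =
        -(∫ t in Set.Ioc 0 x, g t) + (1 - Real.exp (-x)) * Real.log x := by
    intro x hx
    have hIoc : IntegrableOn g (Set.Ioc 0 x) :=
      aux_integrable_g.mono_set Set.Ioc_subset_Ioi_self
    have hIoi : IntegrableOn g (Set.Ioi x) :=
      aux_integrable_g.mono_set (Set.Ioi_subset_Ioi hx.le)
    have hsplit : (∫ t in Set.Ioi (0:ℝ), g t) =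
        (∫ t in Set.Ioc 0 x, g t) + ∫ t in Set.Ioi x, g t := by
      rw [← setIntegral_union (Set.Ioc_disjoint_Ioi le_rfl) measurableSet_Ioi hIoc hIoi,
        Set.Ioc_union_Ioi_eq_Ioi hx.le]
    have hsub : (∫ t in Set.Ioi x, g t) - expIntegralE1 x = Real.exp (-x) * Real.log x := by
      rw [expIntegralE1, ← integral_sub hIoi (aux_integrable_E1 hx)]
      exact aux_ibp hx
    have hγ := aux_gamma_eq
    simp only [hg] at hsplit hsub ⊢
    nlinarith [hsplit, hsub, hγ]
  have T1 : Tendsto (fun x : ℝ => ∫ t in Set.Ioc 0 x, g t)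
      (nhdsWithin 0 (Set.Ioi 0)) (nhds 0) := by
    have hmeas : AEStronglyMeasurable g (volume.restrict (Set.Ioi (0:ℝ))) := by
      rw [hg]
      exact (Measurable.aestronglyMeasurable
        (Real.measurable_log.mul (Real.measurable_exp.comp measurable_neg))).restrict
    have := MeasureTheory.tendsto_integral_filter_of_dominated_convergence
      (μ := volume.restrict (Set.Ioi (0:ℝ)))
      (l := nhdsWithin (0:ℝ) (Set.Ioi 0))
      (F := fun x t => (Set.Ioc (0:ℝ) x).indicator g t) (f := fun _ => 0)
      (bound := fun t => ‖g t‖)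
      (Eventually.of_forall fun x => (hmeas.indicator measurableSet_Ioc))
      (Eventually.of_forall fun x => ae_of_all _ fun t =>
        norm_indicator_le_norm_self g t)
      aux_integrable_g.norm
      ?_
    · have heq : ∀ x : ℝ, (∫ t, (Set.Ioc (0:ℝ) x).indicator g t
          ∂(volume.restrict (Set.Ioi (0:ℝ)))) = ∫ t in Set.Ioc 0 x, g t := by
        intro x
        rw [integral_indicator measurableSet_Ioc,
          MeasureTheory.Measure.restrict_restrict measurableSet_Ioc,
          Set.Ioc_inter_Ioi]
        simp
      simpa [heq, integral_zero] using this
    · filter_upwards [ae_restrict_mem measurableSet_Ioi] with t ht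
      have : ∀ᶠ x in nhdsWithin (0:ℝ) (Set.Ioi 0),
          (Set.Ioc (0:ℝ) x).indicator g t = 0 := by
        filter_upwards [Ioo_mem_nhdsGT_of_mem (Set.mem_Ico.2 ⟨le_rfl, ht⟩)] with x hxm
        exact Set.indicator_of_notMem (fun hm => absurd hm.2 (not_le.2 hxm.2)) _
      exact Tendsto.congr' (this.mono fun x hx => hx.symm) tendsto_const_nhds
  have T2 : Tendsto (fun x : ℝ => (1 - Real.exp (-x)) * Real.log x)
      (nhdsWithin 0 (Set.Ioi 0)) (nhds 0) := by
    have hx1 : Tendsto (fun x : ℝ => Real.log x * x) (nhdsWithin 0 (Set.Ioi 0)) (nhds 0) := by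
      have := tendsto_log_mul_rpow_nhdsGT_zero (r := 1) one_pos
      simpa [Real.rpow_one] using this
    refine tendsto_of_tendsto_of_tendsto_of_le_of_le' hx1 (tendsto_const_nhds (x := (0:ℝ)))
      ?_ ?_
    · filter_upwards [Ioo_mem_nhdsGT_of_mem (Set.mem_Ico.2 ⟨le_rfl, one_pos⟩)] with x hx
      have hx0 : 0 < x := hx.1
      have hlog : Real.log x ≤ 0 := Real.log_nonpos hx0.le hx.2.le
      have h1 : 1 - Real.exp (-x) ≤ x := by
        have := Real.add_one_le_exp (-x); linarith
      have h2 : 0 ≤ 1 - Real.exp (-x) := by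
        have : Real.exp (-x) ≤ 1 := Real.exp_le_one_iff.2 (by linarith)
        linarith
      nlinarith
    · filter_upwards [Ioo_mem_nhdsGT_of_mem (Set.mem_Ico.2 ⟨le_rfl, one_pos⟩)] with x hx
      have hlog : Real.log x ≤ 0 := Real.log_nonpos hx.1.le hx.2.le
      have h2 : 0 ≤ 1 - Real.exp (-x) := by
        have : Real.exp (-x) ≤ 1 := Real.exp_le_one_iff.2 (by linarith [hx.1])
        linarith
      exact mul_nonpos_of_nonneg_of_nonpos h2 hlog
  have := (T1.neg).add T2
  rw [neg_zero, zero_add] at this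
  refine this.congr' ?_
  filter_upwards [self_mem_nhdsWithin] with x hx
  exact (key x hx).symm
end

section
/- Let N > 0 be a real number and define the ergodic sum-rate R_E(ρ) = N · e^(N·10^(−ρ/10)) · E₁(N·10^(−ρ/10)) for ρ ∈ ℝ, where E₁(x) = ∫ₓ^∞ e^(−t)/t dt. Then R_E(ρ) − N·((ρ/10)·log(10) − γ − log(N)) tends to 0 as ρ → ∞, where γ is the Euler–Mascheroni constant; i.e., the high-SNR asymptote of R_E is R_E^∞(ρ) = N·((ρ/10)·log(10) − γ − log(N)). -/
open Real Filter MeasureTheory Set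

lemma integrableOn_exp_neg_mul_log : IntegrableOn (fun t => Real.exp (-t) * Real.log t) (Set.Ioi (0:ℝ)) := by
  have h1 : IntegrableOn (fun t => Real.exp (-t) * Real.log t) (Set.Ioc (0:ℝ) 1) := by
    have hg : IntegrableOn (fun t : ℝ => 2 * t ^ (-(1/2) : ℝ)) (Set.Ioc (0:ℝ) 1) := by
      have := (intervalIntegral.intervalIntegrable_rpow' (a := 0) (b := 1)
        (r := (-(1/2) : ℝ)) (by norm_num))
      rw [intervalIntegrable_iff_integrableOn_Ioc_of_le (by norm_num)] at this
      exact this.const_mul 2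
    refine Integrable.mono' hg ?_ ?_
    · refine (ContinuousOn.aestronglyMeasurable ?_ measurableSet_Ioc)
      exact (Real.continuous_exp.comp continuous_neg).continuousOn.mul
        (Real.continuousOn_log.mono (fun t ht => ne_of_gt ht.1))
    · filter_upwards [ae_restrict_mem measurableSet_Ioc] with t ht
      have ht0 : 0 < t := ht.1
      have ht1 : t ≤ 1 := ht.2
      have hlog : |Real.log t| ≤ 2 * t ^ (-(1/2) : ℝ) := by
        have hlt : Real.log t ≤ 0 := Real.log_nonpos ht0.le ht1
        rw [abs_of_nonpos hlt]
        have h2 : Real.log (t ^ (-(1/2) : ℝ)) ≤ t ^ (-(1/2) : ℝ) := by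
          have := Real.log_le_sub_one_of_pos (x := t ^ (-(1/2) : ℝ)) (Real.rpow_pos_of_pos ht0 _)
          linarith
        rw [Real.log_rpow ht0] at h2
        nlinarith
      calc ‖Real.exp (-t) * Real.log t‖ = Real.exp (-t) * |Real.log t| := by
            rw [norm_mul, Real.norm_eq_abs, Real.norm_eq_abs, abs_of_pos (Real.exp_pos _)]
        _ ≤ 1 * (2 * t ^ (-(1/2) : ℝ)) := by
            apply mul_le_mul (Real.exp_le_one_iff.mpr (by linarith)) hlog (abs_nonneg _) one_pos.le
        _ = 2 * t ^ (-(1/2) : ℝ) := one_mul _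
  have h2 : IntegrableOn (fun t => Real.exp (-t) * Real.log t) (Set.Ioi (1:ℝ)) := by
    have hg : IntegrableOn (fun t : ℝ => 2 * Real.exp (-(1/2 * t))) (Set.Ioi (1:ℝ)) := by
      exact IntegrableOn.congr_fun ((exp_neg_integrableOn_Ioi 1 (b := 1/2) (by norm_num)).const_mul 2)
        (fun t _ => by rw [neg_mul]) measurableSet_Ioi
    refine Integrable.mono' hg ?_ ?_
    · refine (ContinuousOn.aestronglyMeasurable ?_ measurableSet_Ioi)
      exact (Real.continuous_exp.comp continuous_neg).continuousOn.mul
        (Real.continuousOn_log.mono (fun t ht => ne_of_gt (zero_lt_one.trans ht)))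
    · filter_upwards [ae_restrict_mem measurableSet_Ioi] with t ht
      have ht1 : 1 < t := ht
      have hlog : |Real.log t| ≤ t := by
        rw [abs_of_nonneg (Real.log_nonneg ht1.le)]
        have := Real.log_le_sub_one_of_pos (by linarith : (0:ℝ) < t)
        linarith
      have hexp : t ≤ 2 * Real.exp (1/2 * t) := by
        have := Real.add_one_le_exp (1/2 * t)
        nlinarith
      calc ‖Real.exp (-t) * Real.log t‖ = Real.exp (-t) * |Real.log t| := by
            rw [norm_mul, Real.norm_eq_abs, Real.norm_eq_abs, abs_of_pos (Real.exp_pos _)]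
        _ ≤ Real.exp (-t) * (2 * Real.exp (1/2 * t)) := by
            exact mul_le_mul_of_nonneg_left (hlog.trans hexp) (Real.exp_pos _).le
        _ = 2 * (Real.exp (-t) * Real.exp (1/2 * t)) := by ring
        _ = 2 * Real.exp (-(1/2 * t)) := by rw [← Real.exp_add]; congr 1; ring
  have : Set.Ioi (0:ℝ) = Set.Ioc 0 1 ∪ Set.Ioi 1 := (Set.Ioc_union_Ioi_eq_Ioi (by norm_num)).symm
  rw [this]
  exact h1.union h2

lemma integrableOn_exp_div {x : ℝ} (hx : 0 < x) :
    IntegrableOn (fun t => Real.exp (-t) / t) (Set.Ioi x) := by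
  have hg : IntegrableOn (fun t : ℝ => x⁻¹ * Real.exp (-1 * t)) (Set.Ioi x) :=
    (exp_neg_integrableOn_Ioi x (by norm_num : (0:ℝ) < 1)).const_mul _
  refine Integrable.mono' hg ?_ ?_
  · refine (ContinuousOn.aestronglyMeasurable ?_ measurableSet_Ioi)
    exact (Real.continuous_exp.comp continuous_neg).continuousOn.div
      continuous_id.continuousOn (fun t ht => ne_of_gt (hx.trans ht))
  · filter_upwards [ae_restrict_mem measurableSet_Ioi] with t ht
    have htx : x < t := ht
    have ht0 : 0 < t := hx.trans htx
    rw [Real.norm_eq_abs, abs_of_pos (by positivity), neg_one_mul]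
    rw [div_le_iff₀ ht0]
    calc Real.exp (-t) = x⁻¹ * Real.exp (-t) * x := by field_simp
      _ ≤ x⁻¹ * Real.exp (-t) * t := by
          apply mul_le_mul_of_nonneg_left htx.le (by positivity)

lemma e1_parts {x : ℝ} (hx : 0 < x) :
    expIntegralE1 x = (∫ t in Set.Ioi x, Real.exp (-t) * Real.log t) - Real.exp (-x) * Real.log x := by
  have hint1 : IntegrableOn (fun t => Real.exp (-t) * Real.log t) (Set.Ioi x) :=
    integrableOn_exp_neg_mul_log.mono (Set.Ioi_subset_Ioi hx.le) le_rfl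
  have hint2 : IntegrableOn (fun t => Real.exp (-t) / t) (Set.Ioi x) := integrableOn_exp_div hx
  have key : ∫ t in Set.Ioi x, (Real.exp (-t) * Real.log t - Real.exp (-t) / t)
      = 0 - (-(Real.exp (-x) * Real.log x)) := by
    apply MeasureTheory.integral_Ioi_of_hasDerivAt_of_tendsto
      (f := fun t => -(Real.exp (-t) * Real.log t))
    · refine ContinuousWithinAt.neg (ContinuousWithinAt.mul ?_ ?_)
      · exact (Real.continuous_exp.comp continuous_neg).continuousWithinAt
      · exact (Real.continuousAt_log hx.ne').continuousWithinAt
    · intro t ht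
      have ht0 : 0 < t := hx.trans ht
      have h1 : HasDerivAt (fun t : ℝ => Real.exp (-t)) (-Real.exp (-t)) t := by
        simpa [Function.comp_def] using ((Real.hasDerivAt_exp (-t)).comp t (hasDerivAt_neg t))
      have h2 : HasDerivAt Real.log t⁻¹ t := Real.hasDerivAt_log ht0.ne'
      have := (h1.mul h2).neg
      convert this using 1
      · rfl
      · rw [div_eq_mul_inv]
        ring
    · exact hint1.sub hint2
    · rw [← neg_zero]
      apply Filter.Tendsto.neg
      apply squeeze_zero_norm' (a := fun t : ℝ => t ^ 1 * Real.exp (-t))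
      · filter_upwards [Filter.eventually_ge_atTop 1] with t ht
        rw [norm_mul, Real.norm_eq_abs, Real.norm_eq_abs, abs_of_pos (Real.exp_pos _), pow_one]
        rw [mul_comm]
        apply mul_le_mul_of_nonneg_right _ (Real.exp_pos _).le
        rw [abs_of_nonneg (Real.log_nonneg ht)]
        have := Real.log_le_sub_one_of_pos (by linarith : (0:ℝ) < t)
        linarith
      · exact tendsto_pow_mul_exp_neg_atTop_nhds_zero 1
  rw [MeasureTheory.integral_sub hint1 hint2] at key
  unfold expIntegralE1
  linarith [key]

lemma gamma_integral_eq : ∫ t in Set.Ioi (0:ℝ), Real.exp (-t) * Real.log t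
    = -Real.eulerMascheroniConstant := by
  have hd1 : HasDerivAt Complex.GammaIntegral
      (∫ t : ℝ in Set.Ioi 0, (t:ℂ) ^ ((1:ℂ) - 1) * (Real.log t * Real.exp (-t))) 1 :=
    Complex.hasDerivAt_GammaIntegral (by simp)
  have hd2 : HasDerivAt Complex.Gamma (-(Real.eulerMascheroniConstant:ℂ)) 1 := by
    simpa using Complex.hasDerivAt_Gamma_one
  have heq : Complex.Gamma =ᶠ[nhds (1:ℂ)] Complex.GammaIntegral := by
    have hopen : IsOpen {s : ℂ | 0 < s.re} := isOpen_lt continuous_const Complex.continuous_re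
    filter_upwards [hopen.mem_nhds (by simp : (0:ℝ) < (1:ℂ).re)] with s hs
    exact Complex.Gamma_eq_integral hs
  have : (∫ t : ℝ in Set.Ioi 0, (t:ℂ) ^ ((1:ℂ) - 1) * (Real.log t * Real.exp (-t)))
      = -(Real.eulerMascheroniConstant:ℂ) := by
    have := hd1.deriv ▸ hd2.deriv ▸ heq.deriv_eq
    rw [← this]
  have h2 : (∫ t : ℝ in Set.Ioi 0, (t:ℂ) ^ ((1:ℂ) - 1) * (Real.log t * Real.exp (-t)))
      = ((∫ t : ℝ in Set.Ioi 0, Real.exp (-t) * Real.log t : ℝ) : ℂ) := by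
    have step : (∫ t : ℝ in Set.Ioi 0, (t:ℂ) ^ ((1:ℂ) - 1) * (Real.log t * Real.exp (-t)))
        = ∫ t : ℝ in Set.Ioi 0, ((Real.exp (-t) * Real.log t : ℝ) : ℂ) := by
      apply setIntegral_congr_fun measurableSet_Ioi
      intro t ht
      simp only [sub_self, Complex.cpow_zero, one_mul]
      push_cast
      ring
    rw [step]
    exact integral_ofReal
  rw [h2] at this
  exact_mod_cast this

lemma tendsto_G : Tendsto (fun x => ∫ t in Set.Ioi x, Real.exp (-t) * Real.log t)
    (nhdsWithin 0 (Set.Ioi (0:ℝ))) (nhds (-Real.eulerMascheroniConstant)) := by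
  have key : Tendsto (fun x => ∫ t in Set.Ioc (0:ℝ) x, Real.exp (-t) * Real.log t)
      (nhdsWithin 0 (Set.Ioi (0:ℝ))) (nhds 0) := by
    have main := MeasureTheory.Integrable.tendsto_setIntegral_nhds_zero
      integrableOn_exp_neg_mul_log (s := fun x : ℝ => Set.Ioc 0 x)
      (l := nhdsWithin 0 (Set.Ioi (0:ℝ))) ?_
    · refine main.congr (fun x => ?_)
      rw [Measure.restrict_restrict measurableSet_Ioc,
        Set.inter_eq_self_of_subset_left Set.Ioc_subset_Ioi_self]
    · have h0 : Tendsto (fun x : ℝ => ENNReal.ofReal x) (nhdsWithin 0 (Set.Ioi (0:ℝ))) (nhds 0) := by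
        rw [← ENNReal.ofReal_zero]
        exact (ENNReal.continuous_ofReal.tendsto 0).comp
          (tendsto_nhdsWithin_of_tendsto_nhds tendsto_id)
      refine h0.congr (fun x => ?_)
      simp only [Function.comp_apply]
      rw [Measure.restrict_apply measurableSet_Ioc,
        Set.inter_eq_self_of_subset_left Set.Ioc_subset_Ioi_self, Real.volume_Ioc]
      simp
  have decomp : ∀ x ∈ Set.Ioi (0:ℝ), (∫ t in Set.Ioi x, Real.exp (-t) * Real.log t)
      = -Real.eulerMascheroniConstant - ∫ t in Set.Ioc (0:ℝ) x, Real.exp (-t) * Real.log t := by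
    intro x hx
    have hsplit : Set.Ioi (0:ℝ) = Set.Ioc 0 x ∪ Set.Ioi x := (Set.Ioc_union_Ioi_eq_Ioi hx.out.le).symm
    have hdisj : Disjoint (Set.Ioc (0:ℝ) x) (Set.Ioi x) := by
      apply Set.disjoint_left.mpr
      intro t ht ht'
      exact absurd ht.2 (not_le.mpr ht')
    have := MeasureTheory.setIntegral_union hdisj measurableSet_Ioi
      (integrableOn_exp_neg_mul_log.mono (hsplit ▸ Set.subset_union_left) le_rfl)
      (integrableOn_exp_neg_mul_log.mono (hsplit ▸ Set.subset_union_right) le_rfl)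
    rw [← hsplit] at this
    rw [gamma_integral_eq] at this
    linarith [this]
  have : Tendsto (fun x => -Real.eulerMascheroniConstant
      - ∫ t in Set.Ioc (0:ℝ) x, Real.exp (-t) * Real.log t)
      (nhdsWithin 0 (Set.Ioi (0:ℝ))) (nhds (-Real.eulerMascheroniConstant)) := by
    simpa using (tendsto_const_nhds (x := -Real.eulerMascheroniConstant)).sub key
  refine this.congr' ?_
  filter_upwards [self_mem_nhdsWithin] with x hx
  exact (decomp x hx).symm

lemma key_asymp : Tendsto (fun x => Real.exp x * expIntegralE1 x
      + Real.eulerMascheroniConstant + Real.log x)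
    (nhdsWithin 0 (Set.Ioi (0:ℝ))) (nhds 0) := by
  have h1 : Tendsto (fun x => Real.exp x * (∫ t in Set.Ioi x, Real.exp (-t) * Real.log t)
      + Real.eulerMascheroniConstant) (nhdsWithin 0 (Set.Ioi (0:ℝ))) (nhds 0) := by
    have hexp : Tendsto (fun x : ℝ => Real.exp x) (nhdsWithin 0 (Set.Ioi (0:ℝ))) (nhds 1) := by
      simpa using (Real.continuous_exp.tendsto 0).comp (tendsto_nhdsWithin_of_tendsto_nhds tendsto_id)
    have := (hexp.mul tendsto_G).add
      (tendsto_const_nhds (x := Real.eulerMascheroniConstant))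
    simpa using this
  refine h1.congr' ?_
  filter_upwards [self_mem_nhdsWithin] with x hx
  rw [e1_parts hx]
  have hx0 : (0:ℝ) < x := hx
  rw [mul_sub, show Real.exp x * (Real.exp (-x) * Real.log x) = Real.log x by
    rw [← mul_assoc, ← Real.exp_add]; simp]
  ring

/-- The high-SNR asymptote of the ergodic sum-rate
`R_E(ρ) = N·e^(N·10^(−ρ/10))·E₁(N·10^(−ρ/10))` is `N·((ρ/10)·log 10 − γ − log N)`:
their difference tends to `0` as `ρ → ∞`. -/
theorem ergodic_high_snr_asymptote (N : ℝ) (hN : 0 < N) :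
    Tendsto (fun ρ : ℝ =>
        N * Real.exp (N * (10 : ℝ) ^ (-ρ / 10)) * expIntegralE1 (N * (10 : ℝ) ^ (-ρ / 10))
          - N * ((ρ / 10) * Real.log 10 - Real.eulerMascheroniConstant - Real.log N))
      atTop (nhds 0) := by
  set x : ℝ → ℝ := fun ρ => N * (10 : ℝ) ^ (-ρ / 10) with hxdef
  have hxpos : ∀ ρ, 0 < x ρ := fun ρ => by positivity
  have hxt : Tendsto x atTop (nhdsWithin 0 (Set.Ioi (0:ℝ))) := by
    rw [tendsto_nhdsWithin_iff]
    constructor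
    · have hexpo : Tendsto (fun ρ : ℝ => -ρ / 10) atTop atBot := by
        apply Tendsto.atBot_div_const (by norm_num)
        exact tendsto_neg_atBot_iff.mpr tendsto_id
      have : Tendsto (fun ρ : ℝ => (10:ℝ) ^ (-ρ / 10)) atTop (nhds 0) :=
        (tendsto_rpow_atBot_of_base_gt_one 10 (by norm_num)).comp hexpo
      simpa using this.const_mul N
    · exact Filter.Eventually.of_forall (fun ρ => hxpos ρ)
  have hcomp := key_asymp.comp hxt
  have : Tendsto (fun ρ => N * (Real.exp (x ρ) * expIntegralE1 (x ρ)
      + Real.eulerMascheroniConstant + Real.log (x ρ))) atTop (nhds 0) := by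
    simpa using hcomp.const_mul N
  refine this.congr ?_
  intro ρ
  have hlog : Real.log (x ρ) = Real.log N + (-ρ / 10) * Real.log 10 := by
    rw [hxdef]
    rw [Real.log_mul hN.ne' (by positivity), Real.log_rpow (by norm_num)]
  rw [hlog]
  ring
end
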